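/- Let X₁, X₂, … be independent zero-mean random variables with X_i ∈ [a_i, b_i] and |b_i − a_i| ≤ 1. For any α, β > 0 with αβ ≥ 1, the probability that the partial sums ever cross the linear boundary, P(∃ n ≥ 1 : Σ_{i=1}^n X_i ≥ αn + β), is at most 7·exp(−αβ/2). -/

import Mathlib

open MeasureTheory ProbabilityTheory Finset

set_option maxHeartbeats 1000000

section LBCAux
open Real

lemma pow8_le_exp {x : ℝ} (hx : 0 ≤ x) : (1 + x/8)^8 ≤ Real.exp x := by
  have h1 : (1 : ℝ) + x/8 ≤ Real.exp (x/8) := by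
    have := Real.add_one_le_exp (x/8); linarith
  calc (1 + x/8)^8 ≤ (Real.exp (x/8))^8 := by
        apply pow_le_pow_left₀ (by positivity) h1
    _ = Real.exp x := by
        rw [← Real.exp_nat_mul]; congr 1; push_cast; ring

lemma exp_le_num {q : ℝ} (hq : 1 ≤ q) : Real.exp (-(q/6)) ≤ (48/49 : ℝ)^8 := by
  have h : ((49:ℝ)/48)^8 ≤ Real.exp (q/6) := by
    calc ((49:ℝ)/48)^8 = (1 + (1:ℝ)/48)^8 := by norm_num
      _ ≤ (1 + (q/6)/8)^8 := by
          apply pow_le_pow_left₀ (by norm_num) (by linarith)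
      _ ≤ Real.exp (q/6) := pow8_le_exp (by linarith)
  rw [Real.exp_neg, inv_le_comm₀ (Real.exp_pos _) (by positivity)]
  calc ((48/49:ℝ)^8)⁻¹ = ((49:ℝ)/48)^8 := by norm_num
    _ ≤ Real.exp (q/6) := h

lemma summable_exp_two_pow {q : ℝ} (hq : 0 < q) :
    Summable (fun j : ℕ => Real.exp (-(q * 2^j)/6)) := by
  have hb1 : Real.exp (-(q/6)) < 1 := by
    rw [Real.exp_lt_one_iff]; linarith
  apply Summable.of_nonneg_of_le (fun j => (Real.exp_pos _).le)
    (fun j => ?_) (summable_geometric_of_lt_one (Real.exp_pos _).le hb1)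
  rw [← Real.exp_nat_mul]
  apply Real.exp_le_exp.2
  have h2 : (j : ℝ) ≤ (2:ℝ)^j := by
    calc (j:ℝ) ≤ ((2^j : ℕ) : ℝ) := by exact_mod_cast (Nat.lt_two_pow_self (n := j)).le
      _ = (2:ℝ)^j := by push_cast; ring
  nlinarith

lemma series_SL {q : ℝ} (hq : 1 ≤ q) :
    ∑' j : ℕ, Real.exp (-(q * 2^j)/6) ≤ 7/2 * Real.exp (-(q/6)) := by
  have hq0 : 0 < q := by linarith
  have hsum := summable_exp_two_pow hq0
  have hr0 : (0:ℝ) < Real.exp (-(q/2)) := Real.exp_pos _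
  have hr1 : Real.exp (-(q/2)) < 1 := by rw [Real.exp_lt_one_iff]; linarith
  have htail : ∀ j : ℕ, Real.exp (-(q * 2^(j+2))/6)
      ≤ Real.exp (-(q/6)) * (Real.exp (-(q/2)))^(j+1) := by
    intro j
    rw [← Real.exp_nat_mul, ← Real.exp_add]
    apply Real.exp_le_exp.2
    have h1 : (j:ℝ) + 1 ≤ (2:ℝ)^j := by
      calc (j:ℝ) + 1 ≤ ((2^j : ℕ) : ℝ) := by exact_mod_cast (Nat.lt_two_pow_self (n := j))
        _ = (2:ℝ)^j := by push_cast; ring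
    have h2 : (2:ℝ)^(j+2) = 4 * (2:ℝ)^j := by ring
    push_cast
    nlinarith
  have hsum2 : Summable (fun j : ℕ => Real.exp (-(q * 2^(j+2))/6)) :=
    (summable_nat_add_iff (f := fun j : ℕ => Real.exp (-(q * 2^j)/6)) 2).2 hsum
  have hgeom : Summable (fun j : ℕ => Real.exp (-(q/6)) * (Real.exp (-(q/2)))^(j+1)) := by
    apply Summable.mul_left
    exact ((summable_geometric_of_lt_one hr0.le hr1).mul_left _).congr (by intro n; rw [pow_succ]; ring)
  have htailsum : ∑' j : ℕ, Real.exp (-(q * 2^(j+2))/6)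
      ≤ Real.exp (-(q/6)) * (Real.exp (-(q/2)) / (1 - Real.exp (-(q/2)))) := by
    calc ∑' j : ℕ, Real.exp (-(q * 2^(j+2))/6)
        ≤ ∑' j : ℕ, Real.exp (-(q/6)) * (Real.exp (-(q/2)))^(j+1) :=
          Summable.tsum_le_tsum htail hsum2 hgeom
      _ = Real.exp (-(q/6)) * (Real.exp (-(q/2)) * (1 - Real.exp (-(q/2)))⁻¹) := by
          rw [tsum_mul_left]
          congr 1
          have : (fun j : ℕ => (Real.exp (-(q/2)))^(j+1))
              = (fun j : ℕ => Real.exp (-(q/2)) * (Real.exp (-(q/2)))^j) := by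
            funext j; rw [pow_succ]; ring
          rw [this, tsum_mul_left, tsum_geometric_of_lt_one hr0.le hr1]
      _ = _ := by ring
  have hsplit : ∑' j : ℕ, Real.exp (-(q * 2^j)/6)
      = Real.exp (-(q * 2^0)/6) + (Real.exp (-(q * 2^1)/6)
        + ∑' j : ℕ, Real.exp (-(q * 2^(j+2))/6)) := by
    rw [Summable.tsum_eq_zero_add hsum]
    congr 1
    have h1 := Summable.tsum_eq_zero_add ((summable_nat_add_iff (f := fun j : ℕ => Real.exp (-(q * 2^j)/6)) 1).2 hsum)
    simpa using h1
  have hC1 : Real.exp (-(q * 2^1)/6) ≤ Real.exp (-(q/6)) * (48/49:ℝ)^8 := by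
    have he : Real.exp (-(q * 2^1)/6) = Real.exp (-(q/6)) * Real.exp (-(q/6)) := by
      rw [← Real.exp_add]; congr 1; ring
    rw [he]
    exact mul_le_mul_of_nonneg_left (exp_le_num hq) (Real.exp_pos _).le
  have hC2 : Real.exp (-(q/2)) / (1 - Real.exp (-(q/2))) ≤ 1 / ((17/16:ℝ)^8 - 1) := by
    have h17 : (0:ℝ) < (17/16:ℝ)^8 - 1 := by norm_num
    have hexp : ((17:ℝ)/16)^8 ≤ Real.exp (q/2) := by
      calc ((17:ℝ)/16)^8 = (1 + (1:ℝ)/16)^8 := by norm_num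
        _ ≤ (1 + (q/2)/8)^8 := by apply pow_le_pow_left₀ (by norm_num) (by linarith)
        _ ≤ Real.exp (q/2) := pow8_le_exp (by linarith)
    have hinv : Real.exp (-(q/2)) * Real.exp (q/2) = 1 := by
      rw [← Real.exp_add]; simp
    rw [div_le_div_iff₀ (by linarith) h17]
    nlinarith [Real.exp_pos (q/2), Real.exp_pos (-(q/2))]
  have h00 : Real.exp (-(q * 2^0)/6) = Real.exp (-(q/6)) := by congr 1; ring
  have hnum : (1:ℝ) + (48/49:ℝ)^8 + 1/((17/16:ℝ)^8 - 1) ≤ 7/2 := by norm_num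
  have hexp0 : (0:ℝ) ≤ Real.exp (-(q/6)) := (Real.exp_pos _).le
  have h2 : Real.exp (-(q/6)) * (Real.exp (-(q/2)) / (1 - Real.exp (-(q/2))))
      ≤ Real.exp (-(q/6)) * (1/((17/16:ℝ)^8 - 1)) :=
    mul_le_mul_of_nonneg_left hC2 hexp0
  calc ∑' j : ℕ, Real.exp (-(q * 2^j)/6)
      = Real.exp (-(q * 2^0)/6) + (Real.exp (-(q * 2^1)/6)
        + ∑' j : ℕ, Real.exp (-(q * 2^(j+2))/6)) := hsplit
    _ ≤ Real.exp (-(q/6)) + (Real.exp (-(q/6)) * (48/49:ℝ)^8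
        + Real.exp (-(q/6)) * (1/((17/16:ℝ)^8 - 1))) := by
        rw [h00]; linarith
    _ = Real.exp (-(q/6)) * (1 + (48/49:ℝ)^8 + 1/((17/16:ℝ)^8 - 1)) := by ring
    _ ≤ 7/2 * Real.exp (-(q/6)) := by nlinarith

lemma exp_quad {x : ℝ} (hx : |x| ≤ 1) : Real.exp x ≤ 1 + x + 3/4 * x^2 := by
  have h := Real.exp_bound hx (n := 2) (by norm_num)
  have hs : ∑ i ∈ range 2, x^i / i.factorial = 1 + x := by
    simp [Finset.sum_range_succ]
  rw [hs] at h
  have h2 : |x|^2 * (2+1) / ((2:ℕ).factorial * 2) = 3/4 * x^2 := by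
    rw [sq_abs]; simp [Nat.factorial]; ring
  have := abs_le.1 h
  have hxx : |x|^2 * ((2+1:ℕ) / ((2:ℕ).factorial * 2)) = 3/4 * x^2 := by
    rw [sq_abs]; norm_num [Nat.factorial]; ring
  nlinarith [sq_abs x, abs_le.1 h]

variable {Ω : Type*} [MeasurableSpace Ω] {μ : Measure Ω} [IsProbabilityMeasure μ]

lemma integrable_of_abs_le {f : Ω → ℝ} (hf : Measurable f) {C : ℝ}
    (h : ∀ ω, |f ω| ≤ C) : Integrable f μ :=
  (integrable_const C).mono' hf.aestronglyMeasurable (ae_of_all _ (by simpa using h))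

lemma mgf_single_le {Y : Ω → ℝ} (hY : Measurable Y) (hb : ∀ ω, |Y ω| ≤ 1)
    (hm : ∫ ω, Y ω ∂μ = 0) {t : ℝ} (ht0 : 0 ≤ t) (ht1 : t ≤ 1) :
    ∫ ω, Real.exp (t * Y ω) ∂μ ≤ Real.exp (3/4 * t^2) := by
  have hpt : ∀ ω, Real.exp (t * Y ω) ≤ 1 + t * Y ω + 3/4 * t^2 * (Y ω)^2 := by
    intro ω
    have habs : |t * Y ω| ≤ 1 := by
      rw [abs_mul, abs_of_nonneg ht0]
      calc t * |Y ω| ≤ 1 * 1 := by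
            apply mul_le_mul ht1 (hb ω) (abs_nonneg _) zero_le_one
        _ = 1 := by ring
    have := exp_quad habs
    calc Real.exp (t * Y ω) ≤ 1 + t * Y ω + 3/4 * (t * Y ω)^2 := this
      _ = 1 + t * Y ω + 3/4 * t^2 * (Y ω)^2 := by ring
  have hint1 : Integrable Y μ := integrable_of_abs_le hY (C := 1) hb
  have hint2 : Integrable (fun ω => (Y ω)^2) μ := by
    apply integrable_of_abs_le (hY.pow_const 2) (C := 1)
    intro ω
    rw [abs_pow]
    exact pow_le_one₀ (abs_nonneg _) (hb ω)
  have hintE : Integrable (fun ω => Real.exp (t * Y ω)) μ := by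
    apply integrable_of_abs_le ((hY.const_mul t).exp) (C := Real.exp 1)
    intro ω
    rw [abs_of_pos (Real.exp_pos _), Real.exp_le_exp]
    calc t * Y ω ≤ |t * Y ω| := le_abs_self _
      _ ≤ 1 := by
        rw [abs_mul, abs_of_nonneg ht0]
        calc t * |Y ω| ≤ 1 * 1 :=
              mul_le_mul ht1 (hb ω) (abs_nonneg _) zero_le_one
          _ = 1 := by ring
  have hintA : Integrable (fun ω => 1 + t * Y ω) μ := (integrable_const 1).add (hint1.const_mul t)
  have hintB : Integrable (fun ω => 1 + t * Y ω + 3/4 * t^2 * (Y ω)^2) μ :=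
    hintA.add (hint2.const_mul _)
  have hInt : ∫ ω, Real.exp (t * Y ω) ∂μ ≤ ∫ ω, (1 + t * Y ω + 3/4 * t^2 * (Y ω)^2) ∂μ :=
    integral_mono hintE hintB hpt
  have hval : ∫ ω, (1 + t * Y ω + 3/4 * t^2 * (Y ω)^2) ∂μ = 1 + 3/4 * t^2 * ∫ ω, (Y ω)^2 ∂μ := by
    rw [integral_add hintA (hint2.const_mul _),
      integral_add (integrable_const 1) (hint1.const_mul t),
      integral_const, integral_const_mul, integral_const_mul, hm]
    simp
  have hY2 : ∫ ω, (Y ω)^2 ∂μ ≤ 1 := by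
    calc ∫ ω, (Y ω)^2 ∂μ ≤ ∫ _ω, (1:ℝ) ∂μ := by
          apply integral_mono hint2 (integrable_const 1)
          intro ω
          have h := abs_le.1 (hb ω)
          simp only
          nlinarith [h.1, h.2]
      _ = 1 := by simp
  calc ∫ ω, Real.exp (t * Y ω) ∂μ ≤ 1 + 3/4 * t^2 * ∫ ω, (Y ω)^2 ∂μ := by
        rw [← hval]; exact hInt
    _ ≤ 1 + 3/4 * t^2 := by nlinarith
    _ ≤ Real.exp (3/4 * t^2) := by
        have := Real.add_one_le_exp (3/4 * t^2); linarith

lemma mgf_single_ge {Y : Ω → ℝ} (hY : Measurable Y) (hb : ∀ ω, |Y ω| ≤ 1)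
    (hm : ∫ ω, Y ω ∂μ = 0) {t : ℝ} (ht0 : 0 ≤ t) (ht1 : t ≤ 1) :
    1 ≤ ∫ ω, Real.exp (t * Y ω) ∂μ := by
  have hintE : Integrable (fun ω => Real.exp (t * Y ω)) μ := by
    apply integrable_of_abs_le ((hY.const_mul t).exp) (C := Real.exp 1)
    intro ω
    rw [abs_of_pos (Real.exp_pos _), Real.exp_le_exp]
    calc t * Y ω ≤ |t * Y ω| := le_abs_self _
      _ ≤ 1 := by
        rw [abs_mul, abs_of_nonneg ht0]
        calc t * |Y ω| ≤ 1 * 1 :=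
              mul_le_mul ht1 (hb ω) (abs_nonneg _) zero_le_one
          _ = 1 := by ring
  have hint1 : Integrable Y μ := integrable_of_abs_le hY (C := 1) hb
  have hintA : Integrable (fun ω => 1 + t * Y ω) μ := (integrable_const 1).add (hint1.const_mul t)
  have h1 : ∫ ω, (1 + t * Y ω) ∂μ ≤ ∫ ω, Real.exp (t * Y ω) ∂μ := by
    apply integral_mono hintA hintE
    intro ω
    simp only
    have := Real.add_one_le_exp (t * Y ω); linarith
  have h2 : ∫ ω, (1 + t * Y ω) ∂μ = 1 := by
    rw [integral_add (integrable_const 1) (hint1.const_mul t), integral_const,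
      integral_const_mul, hm]
    simp
  linarith

variable {Ω : Type*} [MeasurableSpace Ω] {μ : Measure Ω} [IsProbabilityMeasure μ]

lemma integrable_of_abs_le' {f : Ω → ℝ} (hf : Measurable f) {C : ℝ}
    (h : ∀ ω, |f ω| ≤ C) : Integrable f μ :=
  (integrable_const C).mono' hf.aestronglyMeasurable (ae_of_all _ (by simpa using h))

section SumMgf

variable {X : ℕ → Ω → ℝ}
  (hmeas : ∀ i, Measurable (X i))
  (hindep : iIndepFun X μ)
  (hb : ∀ i ω, |X i ω| ≤ 1)
  (hsingle_le : ∀ i, ∀ {t : ℝ}, 0 ≤ t → t ≤ 1 → ∫ ω, Real.exp (t * X i ω) ∂μ ≤ Real.exp (3/4 * t^2))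
  (hsingle_ge : ∀ i, ∀ {t : ℝ}, 0 ≤ t → t ≤ 1 → 1 ≤ ∫ ω, Real.exp (t * X i ω) ∂μ)

include hmeas hindep in
lemma mgf_eq_prod {t : ℝ} (s : Finset ℕ) :
    ∫ ω, Real.exp (t * ∑ i ∈ s, X i ω) ∂μ = ∏ i ∈ s, ∫ ω, Real.exp (t * X i ω) ∂μ := by
  have h := hindep.mgf_sum hmeas (s := s) (t := t)
  simp only [mgf, Finset.sum_apply] at h
  exact h

include hmeas hindep hsingle_le in
lemma mgf_sum_le {t : ℝ} (ht0 : 0 ≤ t) (ht1 : t ≤ 1) (s : Finset ℕ) :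
    ∫ ω, Real.exp (t * ∑ i ∈ s, X i ω) ∂μ ≤ Real.exp (3/4 * t^2 * s.card) := by
  rw [mgf_eq_prod hmeas hindep]
  calc ∏ i ∈ s, ∫ ω, Real.exp (t * X i ω) ∂μ ≤ ∏ _i ∈ s, Real.exp (3/4 * t^2) := by
        apply Finset.prod_le_prod
        · intro i _
          have h := hindep.mgf_sum hmeas (s := {i}) (t := t)
          have := mgf_nonneg (X := X i) (μ := μ) (t := t)
          simpa [mgf] using this
        · intro i _; exact hsingle_le i ht0 ht1
    _ = Real.exp (3/4 * t^2 * s.card) := by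
        rw [Finset.prod_const, ← Real.exp_nat_mul]; ring_nf

include hmeas hindep hsingle_ge in
lemma mgf_sum_ge {t : ℝ} (ht0 : 0 ≤ t) (ht1 : t ≤ 1) (s : Finset ℕ) :
    1 ≤ ∫ ω, Real.exp (t * ∑ i ∈ s, X i ω) ∂μ := by
  rw [mgf_eq_prod hmeas hindep]
  calc (1:ℝ) = ∏ _i ∈ s, (1:ℝ) := by rw [Finset.prod_const, one_pow]
    _ ≤ ∏ i ∈ s, ∫ ω, Real.exp (t * X i ω) ∂μ :=
        Finset.prod_le_prod (fun i _ => zero_le_one) (fun i _ => hsingle_ge i ht0 ht1)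

end SumMgf


section Block

variable {X : ℕ → Ω → ℝ}

lemma block_bound
    (hmeas : ∀ i, Measurable (X i))
    (hindep : iIndepFun X μ)
    (hb : ∀ i ω, |X i ω| ≤ 1)
    (hsingle_le : ∀ i : ℕ, ∀ {t : ℝ}, 0 ≤ t → t ≤ 1 →
      ∫ ω, Real.exp (t * X i ω) ∂μ ≤ Real.exp (3/4 * t^2))
    (hsingle_ge : ∀ i : ℕ, ∀ {t : ℝ}, 0 ≤ t → t ≤ 1 →
      1 ≤ ∫ ω, Real.exp (t * X i ω) ∂μ)
    (α β : ℝ) (hα : 0 ≤ α) (lo hi : ℕ) (hlohi : lo ≤ hi)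
    {t ε : ℝ} (ht0 : 0 ≤ t) (ht1 : t ≤ 1) (hε : ε ≤ α * lo + β) :
    μ {ω | ∃ n, lo ≤ n ∧ n < hi ∧ α * n + β ≤ ∑ i ∈ range n, X i ω}
      ≤ ENNReal.ofReal (Real.exp (3/4 * t^2 * hi - t * ε)) := by
  classical
  have hSmeas : ∀ n : ℕ, Measurable (fun ω => ∑ i ∈ range n, X i ω) :=
    fun n => Finset.measurable_sum _ (fun i _ => hmeas i)
  -- first crossing sets
  set A : ℕ → Set Ω := fun n => {ω | (α * n + β ≤ ∑ i ∈ range n, X i ω)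
    ∧ ∀ m, lo ≤ m → m < n → ∑ i ∈ range m, X i ω < α * m + β} with hA
  -- measurability of A n w.r.t. any σ-algebra making the relevant X i measurable
  have hAmeas_gen : ∀ (m' : MeasurableSpace Ω) (n : ℕ),
      (∀ i, i < n → Measurable[m'] (X i)) → MeasurableSet[m'] (A n) := by
    intro m' n hX
    have hS : ∀ m, m ≤ n → Measurable[m'] (fun ω => ∑ i ∈ range m, X i ω) := by
      intro m hm
      exact Finset.measurable_sum _ (fun i hi => hX i (lt_of_lt_of_le (Finset.mem_range.1 hi) hm))
    have h1 : MeasurableSet[m'] {ω | α * n + β ≤ ∑ i ∈ range n, X i ω} :=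
      measurableSet_le measurable_const (hS n le_rfl)
    have h2 : MeasurableSet[m'] {ω | ∀ m, lo ≤ m → m < n → ∑ i ∈ range m, X i ω < α * m + β} := by
      have : {ω | ∀ m, lo ≤ m → m < n → ∑ i ∈ range m, X i ω < α * m + β}
          = ⋂ m, ⋂ (_ : lo ≤ m), ⋂ (h : m < n), {ω | ∑ i ∈ range m, X i ω < α * m + β} := by
        ext ω; simp [Set.mem_iInter]
      rw [this]
      exact MeasurableSet.iInter fun m => MeasurableSet.iInter fun _ =>
        MeasurableSet.iInter fun hmn => measurableSet_lt (hS m hmn.le) measurable_const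
    have : A n = {ω | α * n + β ≤ ∑ i ∈ range n, X i ω}
        ∩ {ω | ∀ m, lo ≤ m → m < n → ∑ i ∈ range m, X i ω < α * m + β} := by
      rw [hA]; ext ω; simp [Set.mem_setOf_eq, Set.mem_inter_iff]
    rw [this]; exact h1.inter h2
  have hAmeas : ∀ n, MeasurableSet (A n) := fun n =>
    hAmeas_gen _ n (fun i _ => hmeas i)
  -- inclusion into the union of first-crossing events
  have hsub : {ω | ∃ n, lo ≤ n ∧ n < hi ∧ α * n + β ≤ ∑ i ∈ range n, X i ω}
      ⊆ ⋃ n ∈ Finset.Ico lo hi, A n := by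
    rintro ω ⟨n, hn1, hn2, hcr⟩
    have hex : ∃ m, lo ≤ m ∧ α * m + β ≤ ∑ i ∈ range m, X i ω := ⟨n, hn1, hcr⟩
    have hspec := Nat.find_spec hex
    have hmin' : Nat.find hex ≤ n := Nat.find_min' hex ⟨hn1, hcr⟩
    simp only [Set.mem_iUnion]
    refine ⟨Nat.find hex, Finset.mem_Ico.2 ⟨hspec.1, lt_of_le_of_lt hmin' hn2⟩, ?_⟩
    refine ⟨hspec.2, ?_⟩
    intro m hm1 hm2
    by_contra hcon
    push_neg at hcon
    exact (Nat.find_min hex hm2) ⟨hm1, hcon⟩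
  -- indicator sum at most 1
  have hdisj : ∀ ω, ∑ n ∈ Finset.Ico lo hi, (A n).indicator (fun _ => (1:ℝ)) ω ≤ 1 := by
    intro ω
    by_cases hex : ∃ n₀ ∈ Finset.Ico lo hi, ω ∈ A n₀
    · obtain ⟨n₀, hn₀s, hn₀⟩ := hex
      have hle : ∀ n ∈ Finset.Ico lo hi,
          (A n).indicator (fun _ => (1:ℝ)) ω ≤ if n = n₀ then 1 else 0 := by
        intro n hn
        by_cases hmem : ω ∈ A n
        · have heq : n = n₀ := by
            by_contra hne
            rcases lt_or_gt_of_ne hne with hlt | hgt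
            · exact absurd (hn₀.2 n (Finset.mem_Ico.1 hn).1 hlt) (not_lt.2 hmem.1)
            · exact absurd (hmem.2 n₀ (Finset.mem_Ico.1 hn₀s).1 hgt) (not_lt.2 hn₀.1)
          subst heq
          simp [Set.indicator_of_mem hmem]
        · rw [Set.indicator_of_notMem hmem]
          split <;> norm_num
      calc ∑ n ∈ Finset.Ico lo hi, (A n).indicator (fun _ => (1:ℝ)) ω
          ≤ ∑ n ∈ Finset.Ico lo hi, (if n = n₀ then (1:ℝ) else 0) := Finset.sum_le_sum hle
        _ = 1 := by rw [Finset.sum_ite_eq' (Finset.Ico lo hi) n₀ (fun _ => (1:ℝ)), if_pos hn₀s]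
    · push_neg at hex
      have : ∀ n ∈ Finset.Ico lo hi, (A n).indicator (fun _ => (1:ℝ)) ω = 0 := by
        intro n hn; exact Set.indicator_of_notMem (hex n hn) _
      rw [Finset.sum_congr rfl this]
      simp
  -- boundedness facts
  have hboundsum : ∀ (s : Finset ℕ) (ω : Ω), |∑ i ∈ s, X i ω| ≤ (s.card : ℝ) := by
    intro s ω
    calc |∑ i ∈ s, X i ω| ≤ ∑ i ∈ s, |X i ω| := Finset.abs_sum_le_sum_abs _ _
      _ ≤ ∑ _i ∈ s, (1:ℝ) := Finset.sum_le_sum (fun i _ => hb i ω)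
      _ = s.card := by rw [Finset.sum_const]; simp
  have hexp_abs : ∀ (s : Finset ℕ) (ω : Ω),
      |Real.exp (t * ∑ i ∈ s, X i ω)| ≤ Real.exp s.card := by
    intro s ω
    rw [abs_of_pos (Real.exp_pos _), Real.exp_le_exp]
    calc t * ∑ i ∈ s, X i ω ≤ |t * ∑ i ∈ s, X i ω| := le_abs_self _
      _ = t * |∑ i ∈ s, X i ω| := by rw [abs_mul, abs_of_nonneg ht0]
      _ ≤ 1 * s.card := mul_le_mul ht1 (hboundsum s ω) (abs_nonneg _) zero_le_one
      _ = s.card := one_mul _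
  have hFmeas : Measurable (fun ω => Real.exp (t * ∑ i ∈ range hi, X i ω)) :=
    ((hSmeas hi).const_mul t).exp
  have hFint : Integrable (fun ω => Real.exp (t * ∑ i ∈ range hi, X i ω)) μ :=
    integrable_of_abs_le' hFmeas (hexp_abs (range hi))
  have hYmeas : ∀ n, Measurable ((A n).indicator (fun _ => (1:ℝ))) :=
    fun n => measurable_const.indicator (hAmeas n)
  have hYabs : ∀ n ω, |(A n).indicator (fun _ => (1:ℝ)) ω| ≤ 1 := by
    intro n ω; by_cases h : ω ∈ A n <;> simp [h]
  have hYint : ∀ n, Integrable ((A n).indicator (fun _ => (1:ℝ))) μ :=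
    fun n => integrable_of_abs_le' (hYmeas n) (hYabs n)
  have hYFint : ∀ n, Integrable
      (fun ω => (A n).indicator (fun _ => (1:ℝ)) ω * Real.exp (t * ∑ i ∈ range hi, X i ω)) μ := by
    intro n
    apply integrable_of_abs_le' ((hYmeas n).mul hFmeas) (C := Real.exp (range hi).card)
    intro ω
    rw [Pi.mul_apply, abs_mul]
    calc |(A n).indicator (fun _ => (1:ℝ)) ω| * |Real.exp (t * ∑ i ∈ range hi, X i ω)|
        ≤ 1 * Real.exp (range hi).card :=
          mul_le_mul (hYabs n ω) (hexp_abs _ ω) (abs_nonneg _) zero_le_one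
      _ = _ := one_mul _
  -- step 1 : per-piece estimate via independence
  have step1 : ∀ n ∈ Finset.Ico lo hi,
      Real.exp (t * ε) * (μ (A n)).toReal
        ≤ ∫ ω, (A n).indicator (fun _ => (1:ℝ)) ω * Real.exp (t * ∑ i ∈ range hi, X i ω) ∂μ := by
    intro n hn
    obtain ⟨hn1, hn2⟩ := Finset.mem_Ico.1 hn
    have hGmeas : Measurable (fun ω => Real.exp (t * ∑ i ∈ Finset.Ico n hi, X i ω)) :=
      ((Finset.measurable_sum _ (fun i _ => hmeas i)).const_mul t).exp
    have hGint : Integrable (fun ω => Real.exp (t * ∑ i ∈ Finset.Ico n hi, X i ω)) μ :=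
      integrable_of_abs_le' hGmeas (hexp_abs (Finset.Ico n hi))
    -- independence of the indicator and the future increment
    have hdisjST : Disjoint {i : ℕ | i < n} {i : ℕ | n ≤ i} := by
      rw [Set.disjoint_left]
      intro i hi1 hi2
      simp only [Set.mem_setOf_eq] at hi1 hi2
      omega
    have base : Indep (⨆ i ∈ {i : ℕ | i < n}, MeasurableSpace.comap (X i) inferInstance)
        (⨆ i ∈ {i : ℕ | n ≤ i}, MeasurableSpace.comap (X i) inferInstance) μ :=
      indep_iSup_of_disjoint (fun i => (hmeas i).comap_le) hindep.iIndep hdisjST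
    have hXm1 : ∀ i, i < n →
        Measurable[⨆ i ∈ {i : ℕ | i < n}, MeasurableSpace.comap (X i) inferInstance] (X i) := by
      intro i hi s hs
      have hle := le_biSup (fun i => MeasurableSpace.comap (X i)
        (inferInstance : MeasurableSpace ℝ)) (show i ∈ {i : ℕ | i < n} from hi)
      exact hle _ ⟨s, hs, rfl⟩
    have hXm2 : ∀ i, n ≤ i →
        Measurable[⨆ i ∈ {i : ℕ | n ≤ i}, MeasurableSpace.comap (X i) inferInstance] (X i) := by
      intro i hi s hs
      have hle := le_biSup (fun i => MeasurableSpace.comap (X i)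
        (inferInstance : MeasurableSpace ℝ)) (show i ∈ {i : ℕ | n ≤ i} from hi)
      exact hle _ ⟨s, hs, rfl⟩
    have hYm1 : Measurable[⨆ i ∈ {i : ℕ | i < n}, MeasurableSpace.comap (X i) inferInstance]
        ((A n).indicator (fun _ => (1:ℝ))) :=
      Measurable.indicator measurable_const (hAmeas_gen _ n hXm1)
    have hGm2 : Measurable[⨆ i ∈ {i : ℕ | n ≤ i}, MeasurableSpace.comap (X i) inferInstance]
        (fun ω => Real.exp (t * ∑ i ∈ Finset.Ico n hi, X i ω)) := by
      apply Measurable.exp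
      apply Measurable.const_mul
      exact Finset.measurable_sum _ (fun i hi => hXm2 i (Finset.mem_Ico.1 hi).1)
    have hYG : IndepFun ((A n).indicator (fun _ => (1:ℝ)))
        (fun ω => Real.exp (t * ∑ i ∈ Finset.Ico n hi, X i ω)) μ := by
      rw [IndepFun_iff_Indep]
      exact indep_of_indep_of_le_left
        (indep_of_indep_of_le_right base hGm2.comap_le) hYm1.comap_le
    have hprod : ∫ ω, (A n).indicator (fun _ => (1:ℝ)) ω
          * Real.exp (t * ∑ i ∈ Finset.Ico n hi, X i ω) ∂μ
        = (∫ ω, (A n).indicator (fun _ => (1:ℝ)) ω ∂μ)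
          * ∫ ω, Real.exp (t * ∑ i ∈ Finset.Ico n hi, X i ω) ∂μ :=
      hYG.integral_mul_eq_mul_integral (hYint n).1 hGint.1
    have hYval : ∫ ω, (A n).indicator (fun _ => (1:ℝ)) ω ∂μ = (μ (A n)).toReal :=
      integral_indicator_one (hAmeas n)
    have hGge : 1 ≤ ∫ ω, Real.exp (t * ∑ i ∈ Finset.Ico n hi, X i ω) ∂μ :=
      mgf_sum_ge hmeas hindep hsingle_ge ht0 ht1 _
    have hYGint : Integrable (fun ω => (A n).indicator (fun _ => (1:ℝ)) ω
        * Real.exp (t * ∑ i ∈ Finset.Ico n hi, X i ω)) μ := by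
      apply integrable_of_abs_le' ((hYmeas n).mul hGmeas) (C := Real.exp (Finset.Ico n hi).card)
      intro ω
      rw [Pi.mul_apply, abs_mul]
      calc |(A n).indicator (fun _ => (1:ℝ)) ω| * |Real.exp (t * ∑ i ∈ Finset.Ico n hi, X i ω)|
          ≤ 1 * Real.exp (Finset.Ico n hi).card :=
            mul_le_mul (hYabs n ω) (hexp_abs _ ω) (abs_nonneg _) zero_le_one
        _ = _ := one_mul _
    have hpt : ∀ ω, Real.exp (t * ε) * ((A n).indicator (fun _ => (1:ℝ)) ω
          * Real.exp (t * ∑ i ∈ Finset.Ico n hi, X i ω))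
        ≤ (A n).indicator (fun _ => (1:ℝ)) ω * Real.exp (t * ∑ i ∈ range hi, X i ω) := by
      intro ω
      by_cases h : ω ∈ A n
      · have hsplitS : ∑ i ∈ range hi, X i ω
            = ∑ i ∈ range n, X i ω + ∑ i ∈ Finset.Ico n hi, X i ω := by
          exact (Finset.sum_range_add_sum_Ico (fun i => X i ω) (le_of_lt hn2)).symm
        simp only [Set.indicator_of_mem h, one_mul]
        rw [hsplitS, mul_add, Real.exp_add]
        have hSn : ε ≤ ∑ i ∈ range n, X i ω := by
          have h0 : α * lo ≤ α * n := by
            apply mul_le_mul_of_nonneg_left _ hα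
            exact_mod_cast hn1
          have h1 : α * (lo:ℝ) + β ≤ α * n + β := by linarith
          exact le_trans hε (le_trans h1 h.1)
        have hee := Real.exp_le_exp.2 (mul_le_mul_of_nonneg_left hSn ht0)
        exact mul_le_mul_of_nonneg_right hee (Real.exp_pos _).le
      · simp [Set.indicator_of_notMem h]
    calc Real.exp (t * ε) * (μ (A n)).toReal
        ≤ Real.exp (t * ε) * ∫ ω, (A n).indicator (fun _ => (1:ℝ)) ω
            * Real.exp (t * ∑ i ∈ Finset.Ico n hi, X i ω) ∂μ := by
          rw [hprod, hYval]
          exact mul_le_mul_of_nonneg_left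
            (le_mul_of_one_le_right ENNReal.toReal_nonneg hGge) (Real.exp_pos _).le
      _ = ∫ ω, Real.exp (t * ε) * ((A n).indicator (fun _ => (1:ℝ)) ω
            * Real.exp (t * ∑ i ∈ Finset.Ico n hi, X i ω)) ∂μ := (integral_const_mul _ _).symm
      _ ≤ ∫ ω, (A n).indicator (fun _ => (1:ℝ)) ω
            * Real.exp (t * ∑ i ∈ range hi, X i ω) ∂μ :=
          integral_mono (hYGint.const_mul _) (hYFint n) hpt
  -- step 2 : summing up
  have step2 : ∑ n ∈ Finset.Ico lo hi, ∫ ω, (A n).indicator (fun _ => (1:ℝ)) ω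
        * Real.exp (t * ∑ i ∈ range hi, X i ω) ∂μ
      ≤ Real.exp (3/4 * t^2 * hi) := by
    rw [← integral_finset_sum _ (fun n _ => hYFint n)]
    have hintsum : Integrable (fun ω => ∑ n ∈ Finset.Ico lo hi,
        (A n).indicator (fun _ => (1:ℝ)) ω * Real.exp (t * ∑ i ∈ range hi, X i ω)) μ :=
      integrable_finset_sum _ (fun n _ => hYFint n)
    calc ∫ ω, ∑ n ∈ Finset.Ico lo hi, (A n).indicator (fun _ => (1:ℝ)) ω
          * Real.exp (t * ∑ i ∈ range hi, X i ω) ∂μ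
        ≤ ∫ ω, Real.exp (t * ∑ i ∈ range hi, X i ω) ∂μ := by
          apply integral_mono hintsum hFint
          intro ω
          simp only
          rw [← Finset.sum_mul]
          calc (∑ n ∈ Finset.Ico lo hi, (A n).indicator (fun _ => (1:ℝ)) ω)
                * Real.exp (t * ∑ i ∈ range hi, X i ω)
              ≤ 1 * Real.exp (t * ∑ i ∈ range hi, X i ω) :=
                mul_le_mul_of_nonneg_right (hdisj ω) (Real.exp_pos _).le
            _ = _ := one_mul _
      _ ≤ Real.exp (3/4 * t^2 * (range hi).card) :=
          mgf_sum_le hmeas hindep hsingle_le ht0 ht1 (range hi)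
      _ = Real.exp (3/4 * t^2 * hi) := by rw [Finset.card_range]
  -- conclusion
  have hsumR : Real.exp (t * ε) * ∑ n ∈ Finset.Ico lo hi, (μ (A n)).toReal
      ≤ Real.exp (3/4 * t^2 * hi) := by
    rw [Finset.mul_sum]
    exact le_trans (Finset.sum_le_sum step1) step2
  have hR : ∑ n ∈ Finset.Ico lo hi, (μ (A n)).toReal ≤ Real.exp (3/4 * t^2 * hi - t * ε) := by
    rw [Real.exp_sub, le_div_iff₀ (Real.exp_pos _)]
    calc (∑ n ∈ Finset.Ico lo hi, (μ (A n)).toReal) * Real.exp (t * ε)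
        = Real.exp (t * ε) * ∑ n ∈ Finset.Ico lo hi, (μ (A n)).toReal := by ring
      _ ≤ _ := hsumR
  calc μ {ω | ∃ n, lo ≤ n ∧ n < hi ∧ α * n + β ≤ ∑ i ∈ range n, X i ω}
      ≤ μ (⋃ n ∈ Finset.Ico lo hi, A n) := measure_mono hsub
    _ ≤ ∑ n ∈ Finset.Ico lo hi, μ (A n) := measure_biUnion_finset_le _ _
    _ = ENNReal.ofReal (∑ n ∈ Finset.Ico lo hi, (μ (A n)).toReal) := by
        rw [ENNReal.ofReal_sum_of_nonneg (fun n _ => ENNReal.toReal_nonneg)]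
        exact Finset.sum_congr rfl (fun n _ => (ENNReal.ofReal_toReal (measure_ne_top μ _)).symm)
    _ ≤ ENNReal.ofReal (Real.exp (3/4 * t^2 * hi - t * ε)) := ENNReal.ofReal_le_ofReal hR

end Block

end LBCAux

/-- Uniform-in-time concentration for independent bounded zero-mean variables
against the linear boundary αn + β: the crossing probability is at most
7·exp(-αβ/2) whenever αβ ≥ 1. -/

theorem linear_boundary_crossing
    {Ω : Type*} [MeasurableSpace Ω] (μ : Measure Ω) [IsProbabilityMeasure μ]
    (X : ℕ → Ω → ℝ) (a b : ℕ → ℝ)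
    (hmeas : ∀ i, Measurable (X i))
    (hindep : iIndepFun X μ)
    (hbdd : ∀ i ω, X i ω ∈ Set.Icc (a i) (b i))
    (hwidth : ∀ i, |b i - a i| ≤ 1)
    (hmean : ∀ i, ∫ ω, X i ω ∂μ = 0)
    (α β : ℝ) (hα : 0 < α) (hβ : 0 < β) (hαβ : 1 ≤ α * β) :
    μ {ω | ∃ n : ℕ, 1 ≤ n ∧ α * n + β ≤ ∑ i ∈ range n, X i ω}
      ≤ ENNReal.ofReal (7 * Real.exp (-(α * β) / 2)) := by
  classical
  -- basic boundedness
  have hXint : ∀ i, Integrable (X i) μ := by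
    intro i
    apply integrable_of_abs_le' (hmeas i) (C := |a i| + |b i|)
    intro ω
    obtain ⟨h1, h2⟩ := hbdd i ω
    rw [abs_le]
    constructor
    · have := neg_abs_le (a i); have := abs_nonneg (b i); linarith
    · have := le_abs_self (b i); have := abs_nonneg (a i); linarith
  have hab : ∀ i, a i ≤ 0 ∧ 0 ≤ b i := by
    intro i
    have h1 : ∫ _ω, a i ∂μ ≤ ∫ ω, X i ω ∂μ :=
      integral_mono (integrable_const _) (hXint i) (fun ω => (hbdd i ω).1)
    have h2 : ∫ ω, X i ω ∂μ ≤ ∫ _ω, b i ∂μ :=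
      integral_mono (hXint i) (integrable_const _) (fun ω => (hbdd i ω).2)
    rw [hmean i] at h1 h2
    simp only [integral_const, probReal_univ, smul_eq_mul, one_mul] at h1 h2
    exact ⟨h1, h2⟩
  have hb1 : ∀ i ω, |X i ω| ≤ 1 := by
    intro i ω
    obtain ⟨h1, h2⟩ := hbdd i ω
    obtain ⟨ha0, hb0⟩ := hab i
    have hw := abs_le.1 (hwidth i)
    rw [abs_le]
    constructor <;> linarith [hw.1, hw.2]
  have hSle : ∀ (n : ℕ) ω, ∑ i ∈ range n, X i ω ≤ (n:ℝ) := by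
    intro n ω
    calc ∑ i ∈ range n, X i ω ≤ ∑ _i ∈ range n, (1:ℝ) :=
          Finset.sum_le_sum (fun i _ => le_trans (le_abs_self _) (hb1 i ω))
      _ = n := by simp
  have hnn : (0:ℝ) ≤ 7 * Real.exp (-(α*β)/2) := by positivity
  by_cases hα1 : 1 ≤ α
  · have hempty : {ω | ∃ n : ℕ, 1 ≤ n ∧ α * n + β ≤ ∑ i ∈ range n, X i ω} = ∅ := by
      ext ω
      simp only [Set.mem_setOf_eq, Set.mem_empty_iff_false, iff_false, not_exists]
      intro n
      rintro ⟨hn, hcr⟩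
      have h1 : (1:ℝ) ≤ (n:ℝ) := by exact_mod_cast hn
      have h2 := hSle n ω
      nlinarith
    rw [hempty, measure_empty]
    exact zero_le
  · push_neg at hα1
    have hq1 : 1 ≤ α * β := hαβ
    have hq0 : 0 < α * β := by linarith
    have hsingle_le : ∀ i : ℕ, ∀ {t : ℝ}, 0 ≤ t → t ≤ 1 →
        ∫ ω, Real.exp (t * X i ω) ∂μ ≤ Real.exp (3/4 * t^2) :=
      fun i {t} ht0 ht1 => mgf_single_le (hmeas i) (hb1 i) (hmean i) ht0 ht1
    have hsingle_ge : ∀ i : ℕ, ∀ {t : ℝ}, 0 ≤ t → t ≤ 1 →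
        1 ≤ ∫ ω, Real.exp (t * X i ω) ∂μ :=
      fun i {t} ht0 ht1 => mgf_single_ge (hmeas i) (hb1 i) (hmean i) ht0 ht1
    -- dyadic peeling
    have hcover : {ω | ∃ n : ℕ, 1 ≤ n ∧ α * n + β ≤ ∑ i ∈ range n, X i ω}
        ⊆ ⋃ k : ℕ, {ω | ∃ n : ℕ, 2^k ≤ n ∧ n < 2^(k+1) ∧ α * n + β ≤ ∑ i ∈ range n, X i ω} := by
      rintro ω ⟨n, hn1, hcr⟩
      simp only [Set.mem_iUnion, Set.mem_setOf_eq]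
      exact ⟨Nat.log 2 n, n, Nat.pow_log_le_self 2 (by omega),
        Nat.lt_pow_succ_log_self (by norm_num) n, hcr⟩
    -- weight sequence
    set w : ℕ → ℝ := fun k =>
      Real.exp (-(α*β)/3) * Real.exp (-((α^2 * 2^k + β^2 / 2^k)/6)) with hw
    have hwpos : ∀ k, 0 < w k := fun k => by positivity
    -- per block bound
    have hblock : ∀ k : ℕ,
        μ {ω | ∃ n : ℕ, 2^k ≤ n ∧ n < 2^(k+1) ∧ α * n + β ≤ ∑ i ∈ range n, X i ω}
          ≤ ENNReal.ofReal (w k) := by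
      intro k
      have hc0 : (0:ℝ) < 2^k := by positivity
      by_cases hcase : β ≤ (2:ℝ)^(k+1)
      · have hε0 : (0:ℝ) < α * 2^k + β := by positivity
        have htt0 : (0:ℝ) ≤ (α * 2^k + β) / (3 * 2^k) := by positivity
        have htt1 : (α * 2^k + β) / (3 * 2^k) ≤ 1 := by
          rw [div_le_one (by positivity)]
          have h1 : α * 2^k ≤ 2^k := by nlinarith
          have h2 : β ≤ 2 * 2^k := by
            have h3 : (2:ℝ)^(k+1) = 2 * 2^k := by ring
            linarith
          linarith
        have hres := block_bound hmeas hindep hb1 hsingle_le hsingle_ge α β hα.le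
          (2^k) (2^(k+1)) (Nat.pow_le_pow_right (by norm_num) (Nat.le_succ k))
          htt0 htt1 (ε := α * 2^k + β)
          (le_of_eq (by push_cast; ring))
        refine le_trans hres (le_of_eq ?_)
        congr 1
        simp only [hw]
        rw [← Real.exp_add]
        congr 1
        have hcast : ((2^(k+1) : ℕ) : ℝ) = 2 * 2^k := by push_cast; ring
        rw [hcast]
        field_simp
        ring
      · push_neg at hcase
        have hempty : {ω | ∃ n : ℕ, 2^k ≤ n ∧ n < 2^(k+1) ∧ α * n + β ≤ ∑ i ∈ range n, X i ω}
            = ∅ := by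
          ext ω
          simp only [Set.mem_setOf_eq, Set.mem_empty_iff_false, iff_false, not_exists]
          intro n
          rintro ⟨_hn1, hn2, hcr⟩
          have h1 : (n:ℝ) < (2:ℝ)^(k+1) := by
            have : (n:ℝ) < ((2^(k+1) : ℕ):ℝ) := by exact_mod_cast hn2
            calc (n:ℝ) < ((2^(k+1) : ℕ):ℝ) := this
              _ = (2:ℝ)^(k+1) := by push_cast; ring
          have h2 := hSle n ω
          have h3 : (0:ℝ) ≤ α * n := by positivity
          nlinarith
        rw [hempty, measure_empty]
        exact zero_le
    -- summability of w
    have h2pk : ∀ k : ℕ, (k:ℝ) ≤ (2:ℝ)^k := by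
      intro k
      calc (k:ℝ) ≤ ((2^k : ℕ) : ℝ) := by exact_mod_cast (Nat.lt_two_pow_self (n := k)).le
        _ = (2:ℝ)^k := by push_cast; ring
    have hwsum : Summable w := by
      have hr1 : Real.exp (-(α^2/6)) < 1 := by
        rw [Real.exp_lt_one_iff]; nlinarith
      apply Summable.of_nonneg_of_le (fun k => (hwpos k).le) (fun k => ?_)
        ((summable_geometric_of_lt_one (Real.exp_pos _).le hr1).mul_left
          (Real.exp (-(α*β)/3)))
      rw [hw]
      simp only
      apply mul_le_mul_of_nonneg_left _ (Real.exp_pos _).le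
      rw [← Real.exp_nat_mul]
      apply Real.exp_le_exp.2
      have h1 : (0:ℝ) ≤ β^2 / 2^k := by positivity
      have h2 := h2pk k
      nlinarith
    -- the tsum bound
    have hfinal : ∑' k, w k ≤ 7 * Real.exp (-(α*β)/2) := by
      -- find k₀
      have hk0ex : ∃ k : ℕ, β ≤ α * 2^k := by
        obtain ⟨m, hm⟩ := exists_nat_gt (β / α)
        refine ⟨m, ?_⟩
        have h2 : (m:ℝ) ≤ (2:ℝ)^m := h2pk m
        rw [div_lt_iff₀ hα] at hm
        nlinarith
      set k₀ := Nat.find hk0ex with hk₀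
      have hspec : β ≤ α * 2^k₀ := Nat.find_spec hk0ex
      have hmin : ∀ k, k < k₀ → α * 2^k < β := by
        intro k hk
        have := Nat.find_min hk0ex hk
        linarith [not_le.1 this]
      have hSL := series_SL hαβ
      have hSLsum := summable_exp_two_pow hq0
      -- tail
      have htail : ∀ j : ℕ, w (j + k₀) ≤ Real.exp (-(α*β)/3) * Real.exp (-((α*β) * 2^j)/6) := by
        intro j
        rw [hw]
        simp only
        apply mul_le_mul_of_nonneg_left _ (Real.exp_pos _).le
        apply Real.exp_le_exp.2
        have h1 : (0:ℝ) ≤ β^2 / 2^(j + k₀) := by positivity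
        have h2 : α^2 * 2^(j + k₀) = (α * 2^k₀) * (α * 2^j) := by
          rw [pow_add]; ring
        have h3 : (α*β) * 2^j ≤ α^2 * 2^(j+k₀) := by
          rw [h2]
          have h4 : (0:ℝ) < α * 2^j := by positivity
          nlinarith
        linarith
      -- head
      have hhead : ∀ k, k < k₀ → w k ≤ Real.exp (-(α*β)/3)
          * Real.exp (-((α*β) * 2^(k₀ - 1 - k))/6) := by
        intro k hk
        rw [hw]
        simp only
        apply mul_le_mul_of_nonneg_left _ (Real.exp_pos _).le
        apply Real.exp_le_exp.2
        have hk1 : k ≤ k₀ - 1 := by omega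
        have hsplit : (2:ℝ)^(k₀ - 1) = 2^(k₀ - 1 - k) * 2^k := by
          rw [← pow_add]
          congr 1
          omega
        have h5 : α * 2^(k₀ - 1) < β := hmin (k₀ - 1) (by omega)
        have h6 : (0:ℝ) ≤ α^2 * 2^k := by positivity
        have h7 : (α*β) * 2^(k₀-1-k) ≤ β^2 / 2^k := by
          rw [le_div_iff₀ (by positivity)]
          calc α*β*2^(k₀-1-k) * 2^k = β * (α * (2^(k₀-1-k) * 2^k)) := by ring
            _ = β * (α * 2^(k₀-1)) := by rw [← hsplit]
            _ ≤ β * β := by nlinarith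
            _ = β^2 := by ring
        linarith
      -- splitting
      have hsplitsum := Summable.sum_add_tsum_nat_add k₀ hwsum
      have htailsum : ∑' j, w (j + k₀)
          ≤ Real.exp (-(α*β)/3) * (7/2 * Real.exp (-((α*β)/6))) := by
        have hws : Summable (fun j => w (j + k₀)) :=
          (summable_nat_add_iff (f := w) k₀).2 hwsum
        calc ∑' j, w (j + k₀)
            ≤ ∑' j, Real.exp (-(α*β)/3) * Real.exp (-((α*β) * 2^j)/6) :=
              Summable.tsum_le_tsum htail hws (hSLsum.mul_left _)
          _ = Real.exp (-(α*β)/3) * ∑' j, Real.exp (-((α*β) * 2^j)/6) := tsum_mul_left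
          _ ≤ _ := by
              apply mul_le_mul_of_nonneg_left _ (Real.exp_pos _).le
              calc ∑' j, Real.exp (-((α*β) * 2^j)/6) ≤ 7/2 * Real.exp (-((α*β)/6)) := by
                    have : ∀ j : ℕ, Real.exp (-((α*β) * 2^j)/6) = Real.exp (-(α*β*2^j)/6) :=
                      fun j => by norm_num
                    simpa using hSL
                _ = _ := by norm_num
      have hheadsum : ∑ k ∈ range k₀, w k
          ≤ Real.exp (-(α*β)/3) * (7/2 * Real.exp (-((α*β)/6))) := by
        calc ∑ k ∈ range k₀, w k
            ≤ ∑ k ∈ range k₀, Real.exp (-(α*β)/3)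
                * Real.exp (-((α*β) * 2^(k₀ - 1 - k))/6) :=
              Finset.sum_le_sum (fun k hk => hhead k (Finset.mem_range.1 hk))
          _ = Real.exp (-(α*β)/3) * ∑ k ∈ range k₀,
              Real.exp (-((α*β) * 2^(k₀ - 1 - k))/6) := by rw [Finset.mul_sum]
          _ = Real.exp (-(α*β)/3) * ∑ k ∈ range k₀,
              Real.exp (-((α*β) * 2^k)/6) := by
              congr 1
              exact Finset.sum_range_reflect (fun k => Real.exp (-((α*β) * 2^k)/6)) k₀
          _ ≤ _ := by
              apply mul_le_mul_of_nonneg_left _ (Real.exp_pos _).le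
              calc ∑ k ∈ range k₀, Real.exp (-((α*β) * 2^k)/6)
                  ≤ ∑' k, Real.exp (-((α*β) * 2^k)/6) :=
                    Summable.sum_le_tsum _ (fun k _ => (Real.exp_pos _).le) hSLsum
                _ ≤ 7/2 * Real.exp (-((α*β)/6)) := hSL
      calc ∑' k, w k = ∑ k ∈ range k₀, w k + ∑' j, w (j + k₀) := hsplitsum.symm
        _ ≤ Real.exp (-(α*β)/3) * (7/2 * Real.exp (-((α*β)/6)))
            + Real.exp (-(α*β)/3) * (7/2 * Real.exp (-((α*β)/6))) :=
            add_le_add hheadsum htailsum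
        _ = 7 * (Real.exp (-(α*β)/3) * Real.exp (-((α*β)/6))) := by ring
        _ = 7 * Real.exp (-(α*β)/2) := by
            rw [← Real.exp_add]
            congr 1
            ring
    -- put everything together
    calc μ {ω | ∃ n : ℕ, 1 ≤ n ∧ α * n + β ≤ ∑ i ∈ range n, X i ω}
        ≤ μ (⋃ k : ℕ, {ω | ∃ n : ℕ, 2^k ≤ n ∧ n < 2^(k+1)
            ∧ α * n + β ≤ ∑ i ∈ range n, X i ω}) := measure_mono hcover
      _ ≤ ∑' k, μ {ω | ∃ n : ℕ, 2^k ≤ n ∧ n < 2^(k+1)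
            ∧ α * n + β ≤ ∑ i ∈ range n, X i ω} := measure_iUnion_le _
      _ ≤ ∑' k, ENNReal.ofReal (w k) := ENNReal.tsum_le_tsum hblock
      _ = ENNReal.ofReal (∑' k, w k) :=
          (ENNReal.ofReal_tsum_of_nonneg (fun k => (hwpos k).le) hwsum).symm
      _ ≤ ENNReal.ofReal (7 * Real.exp (-(α * β) / 2)) := ENNReal.ofReal_le_ofReal hfinal
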